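/- Closedness of the τ-form for the classical Schlesinger system: let A_1, …, A_{N+2} : U → M_2(ℂ) be holomorphic maps solving the Schlesinger system S(1,…,1;N) on U, and suppose that det A_j = 0 and tr A_j = θ_j is constant for j = 1, …, N+2, and that −Σ_{j=1}^{N+2} A_j(t) equals the constant diagonal matrix diag(ρ, ρ + θ_{N+3}) for constants ρ, θ_{N+3} ∈ ℂ. Define holomorphic functions H_1, …, H_N on U by H_i = Σ_{j=1, j≠i}^{N+2} (tr(A_i A_j) − θ_i θ_j)/(t_i − t_j) (where t_{N+1} = 1 and t_{N+2} = 0). Then ∂H_i/∂t_j = ∂H_j/∂t_i on U for all 1 ≤ i, j ≤ N. -/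

import Mathlib

open Finset

/-- Entrywise partial derivative of a matrix-valued map in the `k`-th coordinate
direction. -/
noncomputable def pder {N : ℕ} (k : Fin N)
    (f : (Fin N → ℂ) → Matrix (Fin 2) (Fin 2) ℂ) (t : Fin N → ℂ) :
    Matrix (Fin 2) (Fin 2) ℂ :=
  Matrix.of fun a b => fderiv ℂ (fun s => f s a b) t (Pi.single k 1)

/-- Matrix commutator `[X, Y] = XY − YX`. -/
noncomputable def mComm (X Y : Matrix (Fin 2) (Fin 2) ℂ) : Matrix (Fin 2) (Fin 2) ℂ :=
  X * Y - Y * X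

/-- The value `t_j` for the classical index `j ∈ {1, …, N+2}`: the coordinate
`t ⟨j−1⟩` for `1 ≤ j ≤ N`, and the frozen values `t_{N+1} = 1`, `t_{N+2} = 0`. -/
def tval {N : ℕ} (t : Fin N → ℂ) (j : ℕ) : ℂ :=
  if h : 1 ≤ j ∧ j ≤ N then t ⟨j - 1, by omega⟩ else if j = N + 1 then 1 else 0

/-- The set of points `t ∈ ℂ^N` with `t_i ≠ 0`, `t_i ≠ 1` and `t_i ≠ t_j` for `i ≠ j`. -/
def goodDomain (N : ℕ) : Set (Fin N → ℂ) :=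
  {t | (∀ i, t i ≠ 0 ∧ t i ≠ 1) ∧ ∀ i j, i ≠ j → t i ≠ t j}

/-- `A 1, …, A (N+2) : U → M₂(ℂ)` solve the classical Schlesinger system `S(1,…,1;N)`:
each entry is holomorphic on `U` and the partial differential equations obtained by
equating coefficients of `dt_1, …, dt_N` in
`dA_j = Σ_{i=1,i≠j}^{N+2} [A_i, A_j] d log(t_j − t_i)` (`j = 1, …, N+2`)
hold on `U`, with `t_{N+1} = 1`, `t_{N+2} = 0` held constant.  The coordinate
`k : Fin N` represents the variable `t_{k+1}`. -/
def SolvesSch {N : ℕ} (U : Set (Fin N → ℂ))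
    (A : ℕ → (Fin N → ℂ) → Matrix (Fin 2) (Fin 2) ℂ) : Prop :=
  (∀ j ∈ Icc 1 (N + 2), ∀ a b : Fin 2, DifferentiableOn ℂ (fun t => A j t a b) U) ∧
  ∀ t ∈ U, ∀ k : Fin N, ∀ j ∈ Icc 1 (N + 2),
    pder k (A j) t =
      if (k : ℕ) + 1 = j then
        ∑ i ∈ (Icc 1 (N + 2)).erase j,
          (tval t j - tval t i)⁻¹ • mComm (A i t) (A j t)
      else (-(tval t j - t k)⁻¹) • mComm (A ((k : ℕ) + 1) t) (A j t)

/-- The Hamiltonians `H_i = Σ_{j=1,j≠i}^{N+2} (tr(A_i A_j) − θ_i θ_j)/(t_i − t_j)`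
(`i = 1, …, N`; the coordinate `i : Fin N` represents the classical index `i+1`). -/
noncomputable def schH {N : ℕ}
    (A : ℕ → (Fin N → ℂ) → Matrix (Fin 2) (Fin 2) ℂ) (θ : ℕ → ℂ)
    (i : Fin N) (t : Fin N → ℂ) : ℂ :=
  ∑ j ∈ (Icc 1 (N + 2)).erase ((i : ℕ) + 1),
    ((A ((i : ℕ) + 1) t * A j t).trace - θ ((i : ℕ) + 1) * θ j) / (t i - tval t j)

section helpers

lemma trace2 (X Y : Matrix (Fin 2) (Fin 2) ℂ) :
    (X * Y).trace = ∑ a : Fin 2, ∑ b : Fin 2, X a b * Y b a := by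
  simp [Matrix.trace, Matrix.mul_apply, Matrix.diag]

lemma mComm_anti (X Y : Matrix (Fin 2) (Fin 2) ℂ) : mComm X Y = -mComm Y X := by
  simp [mComm]

lemma trace_cyc (X Y Z : Matrix (Fin 2) (Fin 2) ℂ) :
    (mComm X Y * Z).trace = (mComm Z X * Y).trace := by
  simp only [mComm, Matrix.sub_mul, Matrix.trace_sub, Matrix.mul_assoc]
  rw [Matrix.trace_mul_comm Z (X*Y), Matrix.trace_mul_comm Y (X*Z)]
  simp [Matrix.mul_assoc]

lemma trace_mComm_self (X Y : Matrix (Fin 2) (Fin 2) ℂ) : (mComm X Y * X).trace = 0 := by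
  simp only [mComm, Matrix.sub_mul, Matrix.trace_sub, Matrix.mul_assoc]
  rw [Matrix.trace_mul_comm]
  simp [Matrix.mul_assoc]

lemma fd_coord {N : ℕ} (i : Fin N) (t v : Fin N → ℂ) :
    fderiv ℂ (fun s : Fin N → ℂ => s i) t v = v i := by
  have : (fun s : Fin N → ℂ => s i)
      = (ContinuousLinearMap.proj i : (Fin N → ℂ) →L[ℂ] ℂ) := rfl
  rw [this, ContinuousLinearMap.fderiv]; rfl

lemma fd_apply_sum {N : ℕ} {ι : Type*} (S : Finset ι) (g : ι → (Fin N → ℂ) → ℂ)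
    {t : Fin N → ℂ} (h : ∀ j ∈ S, DifferentiableAt ℂ (g j) t) (v : Fin N → ℂ) :
    fderiv ℂ (fun s => ∑ j ∈ S, g j s) t v = ∑ j ∈ S, fderiv ℂ (g j) t v := by
  rw [fderiv_fun_sum h]
  simp

lemma fd_apply_mul {N : ℕ} {f g : (Fin N → ℂ) → ℂ} {t : Fin N → ℂ}
    (hf : DifferentiableAt ℂ f t) (hg : DifferentiableAt ℂ g t) (v : Fin N → ℂ) :
    fderiv ℂ (fun s => f s * g s) t v
      = fderiv ℂ f t v * g t + f t * fderiv ℂ g t v := by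
  rw [fderiv_fun_mul hf hg]
  simp only [ContinuousLinearMap.add_apply, ContinuousLinearMap.smul_apply, smul_eq_mul]
  ring

lemma fd_apply_div {N : ℕ} {f g : (Fin N → ℂ) → ℂ} {t : Fin N → ℂ}
    (hf : DifferentiableAt ℂ f t) (hg : DifferentiableAt ℂ g t) (h0 : g t ≠ 0) (v : Fin N → ℂ) :
    fderiv ℂ (fun s => f s / g s) t v
      = (fderiv ℂ f t v * g t - f t * fderiv ℂ g t v) / g t ^ 2 := by
  have hinv : HasFDerivAt (fun s => (g s)⁻¹) ((-(g t ^ 2)⁻¹) • fderiv ℂ g t) t :=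
    (hasDerivAt_inv h0).comp_hasFDerivAt t hg.hasFDerivAt
  have hdiv : HasFDerivAt (fun s => f s / g s)
      (f t • ((-(g t ^ 2)⁻¹) • fderiv ℂ g t) + (g t)⁻¹ • fderiv ℂ f t) t := by
    simp only [div_eq_mul_inv]
    exact hf.hasFDerivAt.mul hinv
  rw [hdiv.fderiv]
  simp only [ContinuousLinearMap.add_apply, ContinuousLinearMap.smul_apply, smul_eq_mul]
  field_simp
  ring

lemma tval_succ {N : ℕ} (t : Fin N → ℂ) (i : Fin N) : tval t ((i : ℕ) + 1) = t i := by
  have h : 1 ≤ (i : ℕ) + 1 ∧ (i : ℕ) + 1 ≤ N := ⟨Nat.le_add_left 1 _, i.isLt⟩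
  simp only [tval, dif_pos h]
  exact congrArg t (Fin.ext (by simp))

lemma diff_tval {N : ℕ} (j : ℕ) (t : Fin N → ℂ) :
    DifferentiableAt ℂ (fun s : Fin N → ℂ => tval s j) t := by
  by_cases h : 1 ≤ j ∧ j ≤ N
  · simp only [tval, dif_pos h]
    exact (ContinuousLinearMap.proj (R := ℂ) (φ := fun _ : Fin N => ℂ)
      ⟨j - 1, by omega⟩).differentiableAt
  · simp only [tval, dif_neg h]
    exact differentiableAt_const _

lemma fd_tval {N : ℕ} (j : ℕ) (t : Fin N → ℂ) (k : Fin N) :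
    fderiv ℂ (fun s : Fin N → ℂ => tval s j) t (Pi.single k 1)
      = if j = (k : ℕ) + 1 then 1 else 0 := by
  by_cases h : 1 ≤ j ∧ j ≤ N
  · simp only [tval, dif_pos h]
    have hiff : ((⟨j - 1, by omega⟩ : Fin N) = k) ↔ j = (k : ℕ) + 1 := by
      obtain ⟨h1, h2⟩ := h
      constructor
      · intro hh; have := congrArg Fin.val hh; simp only [Fin.val_mk] at this; omega
      · intro hh; apply Fin.ext; simp only [Fin.val_mk]; omega
    rw [fd_coord, Pi.single_apply]
    simp [hiff]
  · have hj : j ≠ (k : ℕ) + 1 := by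
      have := k.isLt; intro e; subst e; exact h ⟨by omega, by omega⟩
    simp only [tval, dif_neg h, if_neg hj]
    rw [fderiv_fun_const]
    simp

lemma diff_div {N : ℕ} {f g : (Fin N → ℂ) → ℂ} {t : Fin N → ℂ}
    (hf : DifferentiableAt ℂ f t) (hg : DifferentiableAt ℂ g t) (h0 : g t ≠ 0) :
    DifferentiableAt ℂ (fun s => f s / g s) t := by
  simp only [div_eq_mul_inv]
  exact hf.mul (hg.inv h0)

lemma diff_trace {N : ℕ} {P Q : (Fin N → ℂ) → Matrix (Fin 2) (Fin 2) ℂ} {t : Fin N → ℂ}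
    (hP : ∀ a b, DifferentiableAt ℂ (fun s => P s a b) t)
    (hQ : ∀ a b, DifferentiableAt ℂ (fun s => Q s a b) t) :
    DifferentiableAt ℂ (fun s => (P s * Q s).trace) t := by
  have e : (fun s => (P s * Q s).trace)
      = fun s => ∑ a : Fin 2, ∑ b : Fin 2, P s a b * Q s b a := funext fun s => trace2 _ _
  rw [e]
  exact DifferentiableAt.fun_sum fun a _ =>
    DifferentiableAt.fun_sum fun b _ => (hP a b).mul (hQ b a)

lemma fd_trace {N : ℕ} {P Q : (Fin N → ℂ) → Matrix (Fin 2) (Fin 2) ℂ} {t : Fin N → ℂ}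
    (hP : ∀ a b, DifferentiableAt ℂ (fun s => P s a b) t)
    (hQ : ∀ a b, DifferentiableAt ℂ (fun s => Q s a b) t) (k : Fin N) :
    fderiv ℂ (fun s => (P s * Q s).trace) t (Pi.single k 1)
      = (pder k P t * Q t).trace + (P t * pder k Q t).trace := by
  have e : (fun s => (P s * Q s).trace)
      = fun s => ∑ a : Fin 2, ∑ b : Fin 2, P s a b * Q s b a := funext fun s => trace2 _ _
  rw [e, fd_apply_sum _ (fun a s => ∑ b : Fin 2, P s a b * Q s b a) (fun a _ => DifferentiableAt.fun_sum
    fun b _ => (hP a b).mul (hQ b a))]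
  have e2 : ∀ a : Fin 2, fderiv ℂ (fun s => ∑ b : Fin 2, P s a b * Q s b a) t (Pi.single k 1)
      = ∑ b : Fin 2, (fderiv ℂ (fun s => P s a b) t (Pi.single k 1) * Q t b a
          + P t a b * fderiv ℂ (fun s => Q s b a) t (Pi.single k 1)) := by
    intro a
    rw [fd_apply_sum _ (fun b s => P s a b * Q s b a) (fun b _ => (hP a b).mul (hQ b a))]
    exact Finset.sum_congr rfl fun b _ => fd_apply_mul (hP a b) (hQ b a) _
  simp only [e2, trace2, pder, Matrix.of_apply, Finset.sum_add_distrib]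

end helpers

/-- **Closedness of the τ-form for the classical Schlesinger system**: if
`A_1, …, A_{N+2}` solve `S(1,…,1;N)` on a connected open `U` contained in the good
domain, with `det A_j = 0` and `tr A_j = θ_j` constant for `j = 1, …, N+2`, and
`−Σ_{j=1}^{N+2} A_j = diag(ρ, ρ + θ_{N+3})` constant, then
`∂H_i/∂t_k = ∂H_k/∂t_i` on `U`. -/
theorem sch_tau_form_closed (N : ℕ) (hN : 0 < N) (U : Set (Fin N → ℂ))
    (hUopen : IsOpen U) (hUconn : IsConnected U) (hUsub : U ⊆ goodDomain N)
    (A : ℕ → (Fin N → ℂ) → Matrix (Fin 2) (Fin 2) ℂ) (θ : ℕ → ℂ) (ρ : ℂ)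
    (hsol : SolvesSch U A)
    (hdet : ∀ j ∈ Icc 1 (N + 2), ∀ t ∈ U, (A j t).det = 0)
    (htr : ∀ j ∈ Icc 1 (N + 2), ∀ t ∈ U, (A j t).trace = θ j)
    (hinf : ∀ t ∈ U, (-∑ j ∈ Icc 1 (N + 2), A j t) = !![ρ, 0; 0, ρ + θ (N + 3)]) :
    ∀ t ∈ U, ∀ i k : Fin N,
      fderiv ℂ (schH A θ i) t (Pi.single k 1) =
        fderiv ℂ (schH A θ k) t (Pi.single i 1) := by
  obtain ⟨hHol, hPDE⟩ := hsol
  intro t ht i₀ k₀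
  have hdA : ∀ j ∈ Icc 1 (N + 2), ∀ a b : Fin 2,
      DifferentiableAt ℂ (fun s => A j s a b) t :=
    fun j hj a b => (hHol j hj a b).differentiableAt (hUopen.mem_nhds ht)
  have hgood := hUsub ht
  have hne : ∀ m : Fin N, ∀ j ∈ Icc 1 (N + 2), j ≠ (m : ℕ) + 1 → t m - tval t j ≠ 0 := by
    intro m j hj hjm
    rw [sub_ne_zero]
    by_cases h : 1 ≤ j ∧ j ≤ N
    · simp only [tval, dif_pos h]
      apply hgood.2
      intro e
      apply hjm
      have := congrArg Fin.val e
      simp only [Fin.val_mk] at this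
      omega
    · simp only [tval, dif_neg h]
      by_cases h1 : j = N + 1
      · rw [if_pos h1]; exact (hgood.1 m).2
      · rw [if_neg h1]; exact (hgood.1 m).1
  have key : ∀ i k : Fin N, i ≠ k →
      fderiv ℂ (schH A θ i) t (Pi.single k 1)
        = ((A ((i : ℕ) + 1) t * A ((k : ℕ) + 1) t).trace
              - θ ((i : ℕ) + 1) * θ ((k : ℕ) + 1)) / (t i - t k) ^ 2 := by
    clear i₀ k₀
    intro i k hik
    have hi'mem : (i : ℕ) + 1 ∈ Icc 1 (N + 2) := by
      simp only [mem_Icc]; have := i.isLt; omega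
    have hk'mem : (k : ℕ) + 1 ∈ Icc 1 (N + 2) := by
      simp only [mem_Icc]; have := k.isLt; omega
    have hk'i' : (k : ℕ) + 1 ≠ (i : ℕ) + 1 := by
      intro e; exact hik (Fin.ext (by omega))
    have htik : t i - t k ≠ 0 := by
      have := hne i ((k : ℕ) + 1) hk'mem hk'i'
      rwa [tval_succ] at this
    -- differentiability of summands
    have hdiffNum : ∀ j ∈ Icc 1 (N + 2), DifferentiableAt ℂ
        (fun s => (A ((i : ℕ) + 1) s * A j s).trace - θ ((i : ℕ) + 1) * θ j) t :=
      fun j hj => (diff_trace (hdA _ hi'mem) (hdA j hj)).sub (differentiableAt_const _)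
    have hcoord : DifferentiableAt ℂ (fun s : Fin N → ℂ => s i) t :=
      (ContinuousLinearMap.proj (R := ℂ) (φ := fun _ : Fin N => ℂ) i).differentiableAt
    have hdiffDen : ∀ j : ℕ, DifferentiableAt ℂ (fun s : Fin N → ℂ => s i - tval s j) t :=
      fun j => hcoord.sub (diff_tval j t)
    have hdiffG : ∀ j ∈ (Icc 1 (N + 2)).erase ((i : ℕ) + 1), DifferentiableAt ℂ
        (fun s => ((A ((i : ℕ) + 1) s * A j s).trace - θ ((i : ℕ) + 1) * θ j)
          / (s i - tval s j)) t := by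
      intro j hj
      exact diff_div (hdiffNum j (mem_of_mem_erase hj)) (hdiffDen j)
        (hne i j (mem_of_mem_erase hj) (ne_of_mem_erase hj))
    -- pder of A (i+1) in direction k
    have hPi : pder k (A ((i : ℕ) + 1)) t
        = (-(t i - t k)⁻¹) • mComm (A ((k : ℕ) + 1) t) (A ((i : ℕ) + 1) t) := by
      have h := hPDE t ht k ((i : ℕ) + 1) hi'mem
      rw [if_neg (by intro e; exact hik (Fin.ext (by omega)))] at h
      rwa [tval_succ] at h
    -- term for j ≠ k+1
    have hterm : ∀ j ∈ ((Icc 1 (N + 2)).erase ((i : ℕ) + 1)).erase ((k : ℕ) + 1),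
        fderiv ℂ (fun s => ((A ((i : ℕ) + 1) s * A j s).trace - θ ((i : ℕ) + 1) * θ j)
            / (s i - tval s j)) t (Pi.single k 1)
          = (mComm (A j t) (A ((k : ℕ) + 1) t) * A ((i : ℕ) + 1) t).trace
              / ((tval t j - t k) * (t i - t k)) := by
      intro j hj
      have hjI : j ∈ Icc 1 (N + 2) := mem_of_mem_erase (mem_of_mem_erase hj)
      have hjni : j ≠ (i : ℕ) + 1 := ne_of_mem_erase (mem_of_mem_erase hj)
      have hjnk : j ≠ (k : ℕ) + 1 := ne_of_mem_erase hj
      have hdj : t i - tval t j ≠ 0 := hne i j hjI hjni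
      have hdjk : t k - tval t j ≠ 0 := hne k j hjI hjnk
      rw [fd_apply_div (hdiffNum j hjI) (hdiffDen j) hdj]
      have hnum : fderiv ℂ (fun s => (A ((i : ℕ) + 1) s * A j s).trace
            - θ ((i : ℕ) + 1) * θ j) t (Pi.single k 1)
          = (pder k (A ((i : ℕ) + 1)) t * A j t).trace
              + (A ((i : ℕ) + 1) t * pder k (A j) t).trace := by
        rw [fderiv_sub_const]
        exact fd_trace (hdA _ hi'mem) (hdA j hjI) k
      have hdenf : fderiv ℂ (fun s : Fin N → ℂ => s i - tval s j) t (Pi.single k 1) = 0 := by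
        rw [fderiv_fun_sub hcoord (diff_tval j t)]
        simp only [ContinuousLinearMap.sub_apply]
        rw [fd_coord, fd_tval, Pi.single_apply, if_neg hik, if_neg hjnk]
        ring
      rw [hnum, hdenf]
      have hPj : pder k (A j) t
          = (-(tval t j - t k)⁻¹) • mComm (A ((k : ℕ) + 1) t) (A j t) := by
        have h := hPDE t ht k j hjI
        rwa [if_neg (fun e => hjnk e.symm)] at h
      rw [hPi, hPj]
      rw [Matrix.smul_mul, Matrix.trace_smul, Matrix.mul_smul, Matrix.trace_smul]
      rw [trace_cyc (A ((k : ℕ) + 1) t) (A ((i : ℕ) + 1) t) (A j t)]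
      have e2 : (A ((i : ℕ) + 1) t * mComm (A ((k : ℕ) + 1) t) (A j t)).trace
          = -(mComm (A j t) (A ((k : ℕ) + 1) t) * A ((i : ℕ) + 1) t).trace := by
        rw [Matrix.trace_mul_comm, mComm_anti (A ((k : ℕ) + 1) t)]
        simp [Matrix.neg_mul]
      rw [e2]
      have hjk' : tval t j - t k ≠ 0 := sub_ne_zero.mpr (Ne.symm (sub_ne_zero.mp hdjk))
      simp only [smul_eq_mul]
      field_simp
      ring
    -- the special j = k+1 term and assembly
    have hEk : (k : ℕ) + 1 ∈ (Icc 1 (N + 2)).erase ((i : ℕ) + 1) :=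
      mem_erase.mpr ⟨hk'i', hk'mem⟩
    have hi'Ek : (i : ℕ) + 1 ∈ (Icc 1 (N + 2)).erase ((k : ℕ) + 1) :=
      mem_erase.mpr ⟨fun e => hk'i' e.symm, hi'mem⟩
    have hesetcomm : ((Icc 1 (N + 2)).erase ((k : ℕ) + 1)).erase ((i : ℕ) + 1)
        = ((Icc 1 (N + 2)).erase ((i : ℕ) + 1)).erase ((k : ℕ) + 1) := by
      ext x; simp only [mem_erase]; tauto
    have hPk : pder k (A ((k : ℕ) + 1)) t
        = ∑ r ∈ (Icc 1 (N + 2)).erase ((k : ℕ) + 1),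
            (t k - tval t r)⁻¹ • mComm (A r t) (A ((k : ℕ) + 1) t) := by
      have h := hPDE t ht k ((k : ℕ) + 1) hk'mem
      rw [if_pos rfl] at h
      rw [h]
      exact Finset.sum_congr rfl fun r hr => by rw [tval_succ]
    have htermk : fderiv ℂ (fun s => ((A ((i : ℕ) + 1) s * A ((k : ℕ) + 1) s).trace
          - θ ((i : ℕ) + 1) * θ ((k : ℕ) + 1)) / (s i - tval s ((k : ℕ) + 1))) t (Pi.single k 1)
        = ((A ((i : ℕ) + 1) t * A ((k : ℕ) + 1) t).trace
              - θ ((i : ℕ) + 1) * θ ((k : ℕ) + 1)) / (t i - t k) ^ 2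
          + ∑ j ∈ ((Icc 1 (N + 2)).erase ((i : ℕ) + 1)).erase ((k : ℕ) + 1),
              -((mComm (A j t) (A ((k : ℕ) + 1) t) * A ((i : ℕ) + 1) t).trace
                  / ((tval t j - t k) * (t i - t k))) := by
      have hdk : t i - tval t ((k : ℕ) + 1) ≠ 0 := by rw [tval_succ]; exact htik
      rw [fd_apply_div (hdiffNum _ hk'mem) (hdiffDen _) hdk]
      have hnum : fderiv ℂ (fun s => (A ((i : ℕ) + 1) s * A ((k : ℕ) + 1) s).trace
            - θ ((i : ℕ) + 1) * θ ((k : ℕ) + 1)) t (Pi.single k 1)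
          = (pder k (A ((i : ℕ) + 1)) t * A ((k : ℕ) + 1) t).trace
              + (A ((i : ℕ) + 1) t * pder k (A ((k : ℕ) + 1)) t).trace := by
        rw [fderiv_sub_const]
        exact fd_trace (hdA _ hi'mem) (hdA _ hk'mem) k
      have hdenf : fderiv ℂ (fun s : Fin N → ℂ => s i - tval s ((k : ℕ) + 1)) t
          (Pi.single k 1) = -1 := by
        rw [fderiv_fun_sub hcoord (diff_tval _ t)]
        simp only [ContinuousLinearMap.sub_apply]
        rw [fd_coord, fd_tval, Pi.single_apply, if_neg hik, if_pos rfl]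
        ring
      rw [hnum, hdenf, hPi, hPk]
      rw [Matrix.smul_mul, Matrix.trace_smul, trace_mComm_self]
      rw [Matrix.mul_sum, Matrix.trace_sum]
      have e3 : ∀ r ∈ (Icc 1 (N + 2)).erase ((k : ℕ) + 1),
          (A ((i : ℕ) + 1) t * ((t k - tval t r)⁻¹ • mComm (A r t) (A ((k : ℕ) + 1) t))).trace
            = (t k - tval t r)⁻¹
                * (mComm (A r t) (A ((k : ℕ) + 1) t) * A ((i : ℕ) + 1) t).trace := by
        intro r hr
        rw [Matrix.mul_smul, Matrix.trace_smul, Matrix.trace_mul_comm]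
        rfl
      rw [Finset.sum_congr rfl e3, ← Finset.add_sum_erase _ _ hi'Ek, trace_mComm_self,
        mul_zero, zero_add, hesetcomm, tval_succ, smul_eq_mul, mul_zero, zero_add]
      have hgen : ∀ S c : ℂ, (S * (t i - t k) - c * (-1)) / (t i - t k) ^ 2
          = c / (t i - t k) ^ 2 + S / (t i - t k) := by
        intro S c; field_simp; ring
      rw [hgen, Finset.sum_div]
      congr 1
      refine Finset.sum_congr rfl fun j hj => ?_
      have hjI : j ∈ Icc 1 (N + 2) := mem_of_mem_erase (mem_of_mem_erase hj)
      have hjnk : j ≠ (k : ℕ) + 1 := ne_of_mem_erase hj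
      have h1 : t k - tval t j ≠ 0 := hne k j hjI hjnk
      have h2 : tval t j - t k ≠ 0 := sub_ne_zero.mpr (Ne.symm (sub_ne_zero.mp h1))
      field_simp
      ring
    have e0 : schH A θ i = fun s => ∑ j ∈ (Icc 1 (N + 2)).erase ((i : ℕ) + 1),
        ((A ((i : ℕ) + 1) s * A j s).trace - θ ((i : ℕ) + 1) * θ j) / (s i - tval s j) := rfl
    rw [e0, fd_apply_sum _ _ hdiffG, ← Finset.add_sum_erase _ _ hEk, htermk,
      Finset.sum_congr rfl hterm]
    rw [add_assoc, ← Finset.sum_add_distrib]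
    simp
  by_cases hik : i₀ = k₀
  · subst hik; rfl
  · rw [key i₀ k₀ hik, key k₀ i₀ (Ne.symm hik), Matrix.trace_mul_comm]
    have h2 : (t k₀ - t i₀) ^ 2 = (t i₀ - t k₀) ^ 2 := by ring
    rw [h2, mul_comm (θ ((i₀ : ℕ) + 1))]
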